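/- For every real s > −1 and every real c, ∫₀^∞ t^s · exp(−t) · exp(c·exp(−t)) dt = Γ(s + 1) · Σ_{j=0}^∞ c^j / (j! · (j + 1)^(s+1)), where Γ is the Gamma function; in particular both the integral and the series converge. -/

import Mathlib

open Real MeasureTheory

lemma aux_base_integrable {s : ℝ} (hs : -1 < s) :
    IntegrableOn (fun t : ℝ => t ^ s * Real.exp (-t)) (Set.Ioi (0 : ℝ)) := by
  have := Real.GammaIntegral_convergent (s := s + 1) (by linarith)
  refine this.congr_fun (fun t ht => ?_) measurableSet_Ioi
  simp [mul_comm]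

lemma aux_integrable {s : ℝ} (hs : -1 < s) {r : ℝ} (hr : 1 ≤ r) :
    IntegrableOn (fun t : ℝ => t ^ s * Real.exp (-(r * t))) (Set.Ioi (0 : ℝ)) := by
  refine (aux_base_integrable hs).mono' ?_ ?_
  · refine (ContinuousOn.mul ?_ ?_).aestronglyMeasurable measurableSet_Ioi
    · exact continuousOn_id.rpow_const (fun x hx => Or.inl (ne_of_gt hx))
    · exact (Real.continuous_exp.comp (continuous_neg.comp (continuous_const.mul continuous_id))).continuousOn
  · filter_upwards [self_mem_ae_restrict measurableSet_Ioi] with t ht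
    have ht0 : (0:ℝ) < t := ht
    have h1 : Real.exp (-(r * t)) ≤ Real.exp (-t) := by
      apply Real.exp_le_exp.2
      nlinarith
    have h2 : (0:ℝ) ≤ t ^ s := (Real.rpow_pos_of_pos ht0 s).le
    rw [Real.norm_eq_abs, abs_of_nonneg (by positivity)]
    exact mul_le_mul_of_nonneg_left h1 h2

/-- for `s > −1` and any real `c`,
`∫₀^∞ t^s e^(−t) e^(c e^(−t)) dt = Γ(s+1) · Σ_{j≥0} c^j/(j!(j+1)^(s+1))`,
and both the integral and the series converge. -/
theorem integral_rpow_exp_expexp (s c : ℝ) (hs : -1 < s) :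
    IntegrableOn
      (fun t : ℝ => t ^ s * Real.exp (-t) * Real.exp (c * Real.exp (-t)))
      (Set.Ioi (0 : ℝ)) ∧
    Summable (fun j : ℕ =>
      c ^ j / ((j.factorial : ℝ) * ((j : ℝ) + 1) ^ (s + 1))) ∧
    ∫ t in Set.Ioi (0 : ℝ), t ^ s * Real.exp (-t) * Real.exp (c * Real.exp (-t)) =
      Real.Gamma (s + 1) *
        ∑' j : ℕ, c ^ j / ((j.factorial : ℝ) * ((j : ℝ) + 1) ^ (s + 1)) := by
  have hs1 : (0:ℝ) < s + 1 := by linarith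
  set F : ℕ → ℝ → ℝ := fun j t => (c ^ j / j.factorial) * (t ^ s * Real.exp (-(((j:ℝ) + 1) * t)))
    with hF
  -- integrability of each F j
  have hFint : ∀ j : ℕ, IntegrableOn (F j) (Set.Ioi (0:ℝ)) := fun j =>
    (aux_integrable hs (by exact_mod_cast Nat.one_le_iff_ne_zero.2 (by positivity) : (1:ℝ) ≤ (j:ℝ)+1)).const_mul _
  -- value of ∫ t^s exp(-(r t))
  have hval : ∀ j : ℕ, ∫ t in Set.Ioi (0:ℝ), t ^ s * Real.exp (-(((j:ℝ)+1) * t))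
      = (1 / ((j:ℝ)+1)) ^ (s+1) * Real.Gamma (s+1) := by
    intro j
    have := Real.integral_rpow_mul_exp_neg_mul_Ioi (a := s+1) (r := (j:ℝ)+1) hs1 (by positivity)
    simpa using this
  -- integrability of the original function
  have hIntf : IntegrableOn
      (fun t : ℝ => t ^ s * Real.exp (-t) * Real.exp (c * Real.exp (-t))) (Set.Ioi (0:ℝ)) := by
    refine ((aux_base_integrable hs).const_mul (Real.exp |c|)).mono' ?_ ?_
    · refine (ContinuousOn.mul (ContinuousOn.mul ?_ ?_) ?_).aestronglyMeasurable measurableSet_Ioi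
      · exact continuousOn_id.rpow_const (fun x hx => Or.inl (ne_of_gt hx))
      · exact (Real.continuous_exp.comp continuous_neg).continuousOn
      · exact (Real.continuous_exp.comp (continuous_const.mul (Real.continuous_exp.comp continuous_neg))).continuousOn
    · filter_upwards [self_mem_ae_restrict measurableSet_Ioi] with t ht
      have ht0 : (0:ℝ) < t := ht
      have hb : c * Real.exp (-t) ≤ |c| := by
        calc c * Real.exp (-t) ≤ |c| * Real.exp (-t) := by
              exact mul_le_mul_of_nonneg_right (le_abs_self c) (Real.exp_pos _).le
          _ ≤ |c| * 1 := by
              exact mul_le_mul_of_nonneg_left (Real.exp_le_one_iff.2 (by linarith)) (abs_nonneg c)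
          _ = |c| := mul_one _
      rw [Real.norm_eq_abs, abs_of_nonneg (by positivity)]
      calc t ^ s * Real.exp (-t) * Real.exp (c * Real.exp (-t))
          ≤ t ^ s * Real.exp (-t) * Real.exp |c| := by
            exact mul_le_mul_of_nonneg_left (Real.exp_le_exp.2 hb) (by positivity)
        _ = Real.exp |c| * (t ^ s * Real.exp (-t)) := by ring
  -- pointwise expansion
  have hpt : ∀ t ∈ Set.Ioi (0:ℝ),
      t ^ s * Real.exp (-t) * Real.exp (c * Real.exp (-t)) = ∑' j : ℕ, F j t := by
    intro t _
    have hexp : Real.exp (c * Real.exp (-t)) = ∑' j : ℕ, (c * Real.exp (-t)) ^ j / j.factorial := by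
      rw [Real.exp_eq_exp_ℝ, NormedSpace.exp_eq_tsum_div]
    rw [hexp, ← tsum_mul_left]
    refine tsum_congr (fun j => ?_)
    show t ^ s * Real.exp (-t) * ((c * Real.exp (-t)) ^ j / j.factorial)
        = c ^ j / j.factorial * (t ^ s * Real.exp (-(((j:ℝ)+1) * t)))
    have : Real.exp (-(((j:ℝ)+1) * t)) = Real.exp (-t) * Real.exp (-t) ^ j := by
      rw [← Real.exp_nat_mul, ← Real.exp_add]
      ring_nf
    rw [this, mul_pow]
    ring
  -- norm integrals
  have hnorm : ∀ j : ℕ, ∫ t in Set.Ioi (0:ℝ), ‖F j t‖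
      = (|c| ^ j / j.factorial) * ((1 / ((j:ℝ)+1)) ^ (s+1) * Real.Gamma (s+1)) := by
    intro j
    rw [← hval j, ← integral_const_mul]
    refine setIntegral_congr_fun measurableSet_Ioi (fun t ht => ?_)
    have ht0 : (0:ℝ) < t := ht
    rw [hF, Real.norm_eq_abs, abs_mul, abs_div, abs_pow, abs_of_nonneg (by positivity : (0:ℝ) ≤ (j.factorial : ℝ)), abs_of_nonneg (by positivity : (0:ℝ) ≤ t ^ s * Real.exp (-(((j:ℝ)+1)*t)))]
  have hsumnorm : Summable fun j : ℕ => ∫ t in Set.Ioi (0:ℝ), ‖F j t‖ := by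
    refine Summable.of_nonneg_of_le (fun j => ?_) (fun j => ?_)
      (((Real.summable_pow_div_factorial |c|).mul_right (Real.Gamma (s+1)))) 
    · exact integral_nonneg (fun t => norm_nonneg _)
    · rw [hnorm j]
      have h1 : (1 / ((j:ℝ)+1)) ^ (s+1) ≤ 1 :=
        Real.rpow_le_one (by positivity) (by rw [div_le_one (by positivity)]; linarith) hs1.le
      calc (|c| ^ j / j.factorial) * ((1 / ((j:ℝ)+1)) ^ (s+1) * Real.Gamma (s+1))
          ≤ (|c| ^ j / j.factorial) * (1 * Real.Gamma (s+1)) := by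
            refine mul_le_mul_of_nonneg_left (mul_le_mul_of_nonneg_right h1 ?_) (by positivity)
            exact Real.Gamma_nonneg_of_nonneg hs1.le
        _ = |c| ^ j / j.factorial * Real.Gamma (s+1) := by ring
  -- swap integral and sum
  have hswap : ∑' j : ℕ, (∫ t in Set.Ioi (0:ℝ), F j t)
      = ∫ t in Set.Ioi (0:ℝ), t ^ s * Real.exp (-t) * Real.exp (c * Real.exp (-t)) := by
    rw [MeasureTheory.integral_tsum_of_summable_integral_norm hFint hsumnorm]
    exact (setIntegral_congr_fun measurableSet_Ioi (fun t ht => (hpt t ht).symm))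
  have hterm : ∀ j : ℕ, (∫ t in Set.Ioi (0:ℝ), F j t)
      = Real.Gamma (s+1) * (c ^ j / ((j.factorial : ℝ) * ((j:ℝ)+1) ^ (s+1))) := by
    intro j
    rw [hF]
    rw [integral_const_mul, hval j]
    have hfact : (j.factorial : ℝ) ≠ 0 := by positivity
    have hpow : ((j:ℝ)+1) ^ (s+1) ≠ 0 := by positivity
    rw [Real.div_rpow (by norm_num) (by positivity), Real.one_rpow]
    field_simp
  refine ⟨hIntf, ?_, ?_⟩
  · refine Summable.of_norm_bounded (Real.summable_pow_div_factorial |c|) (fun j => ?_)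
    have h1 : (1:ℝ) ≤ ((j:ℝ)+1) ^ (s+1) :=
      Real.one_le_rpow (by linarith [Nat.cast_nonneg (α := ℝ) j]) hs1.le 
    rw [Real.norm_eq_abs, abs_div, abs_pow, abs_mul,
      abs_of_nonneg (by positivity : (0:ℝ) ≤ (j.factorial : ℝ)),
      abs_of_nonneg (by positivity : (0:ℝ) ≤ ((j:ℝ)+1) ^ (s+1))]
    apply div_le_div_of_nonneg_left (by positivity) (by positivity)
    · nlinarith [Nat.one_le_iff_ne_zero.2 (Nat.factorial_ne_zero j), (by exact_mod_cast Nat.one_le_iff_ne_zero.2 (Nat.factorial_ne_zero j) : (1:ℝ) ≤ (j.factorial:ℝ))]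
  · rw [← hswap]
    rw [tsum_congr hterm, tsum_mul_left]
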